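/- For sets X and Y and any function f : X → L(Y), the Kleisli extension f^# : L(X) → L(Y) is a dcpo morphism: it is monotone and preserves least upper bounds of directed families, with respect to the orders l ⊑ m := (isdefined(l) → l = m). -/
import Mathlib


/-- The lifting of a type: pairs of a proposition and a value function. -/
def Lift (X : Type) : Type := Σ P : Prop, (P → X)

/-- The least element of the lifting. -/
def liftBot (X : Type) : Lift X := ⟨False, fun h => h.elim⟩

/-- The unit of the lifting monad. -/
def liftEta {X : Type} (x : X) : Lift X := ⟨True, fun _ => x⟩

/-- The order on the lifting: `l ⊑ m` iff `l` defined implies `l = m`. -/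
def LiftLE {X : Type} (l m : Lift X) : Prop := l.1 → l = m

/-- Kleisli extension of `f : X → Lift Y`. -/
noncomputable def kext {X Y : Type} (f : X → Lift Y) (l : Lift X) : Lift Y :=
  ⟨∃ p : l.1, (f (l.2 p)).1, fun h => (f (l.2 h.choose)).2 h.choose_spec⟩

/-- A type is a set if its identity types are propositions. -/
def IsSet (X : Type) : Prop := ∀ (x y : X) (p q : x = y), p = q

/-- Directedness of a family in the lifting, w.r.t. `LiftLE`. -/
def LDir {X I : Type} (u : I → Lift X) : Prop :=
  Nonempty I ∧ ∀ i j : I, ∃ k : I, LiftLE (u i) (u k) ∧ LiftLE (u j) (u k)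

/-- Least upper bounds in the lifting, w.r.t. `LiftLE`. -/
def LIsLUB {X I : Type} (u : I → Lift X) (d : Lift X) : Prop :=
  (∀ i, LiftLE (u i) d) ∧ ∀ e : Lift X, (∀ i, LiftLE (u i) e) → LiftLE d e


/-- Extensionality for `Lift`. -/
theorem lift_ext {X : Type} {l m : Lift X} (h1 : l.1 ↔ m.1)
    (h2 : ∀ (p : l.1) (q : m.1), l.2 p = m.2 q) : l = m := by
  obtain ⟨P, φ⟩ := l
  obtain ⟨Q, ψ⟩ := m
  have hPQ : P = Q := propext h1
  subst hPQ
  have : φ = ψ := funext fun p => h2 p p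
  rw [this]

/-- Values of equal lift elements agree. -/
theorem lift_val_eq {X : Type} {a b : Lift X} (h : a = b) (p : a.1) (q : b.1) :
    a.2 p = b.2 q := by
  subst h
  rfl

theorem kext_mono {X Y : Type} (f : X → Lift Y) (l m : Lift X)
    (h : LiftLE l m) : LiftLE (kext f l) (kext f m) := by
  intro hd
  obtain ⟨p, _⟩ := hd
  rw [h p]

/-- If `d` is a lub of a directed family `u` and `d` is defined,
then `d` equals some `u j` which is defined. -/
theorem lub_attained {X I : Type} (u : I → Lift X) (d : Lift X)
    (hdir : LDir u) (hlub : LIsLUB u d) (hd : d.1) :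
    ∃ j, (u j).1 ∧ u j = d := by
  -- two defined members are equal
  have heqm : ∀ i j, (u i).1 → (u j).1 → u i = u j := by
    intro i j hi hj
    obtain ⟨k, hik, hjk⟩ := hdir.2 i j
    rw [hik hi, hjk hj]
  -- the canonical upper bound
  set e : Lift X := ⟨∃ i, (u i).1, fun h => (u h.choose).2 h.choose_spec⟩ with he
  have hub : ∀ i, LiftLE (u i) e := by
    intro i hi
    refine lift_ext ⟨fun _ => ⟨i, hi⟩, fun _ => hi⟩ ?_
    intro p q
    exact lift_val_eq (heqm i q.choose hi q.choose_spec) p q.choose_spec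
  have hde : d = e := hlub.2 e hub hd
  have hed : e.1 := hde ▸ hd
  obtain ⟨j, hj⟩ := hed
  exact ⟨j, hj, (hlub.1 j) hj⟩

/-- For sets `X` and `Y` and any `f : X → Lift Y`, the Kleisli extension of `f`
is a dcpo morphism: monotone and preserving least upper bounds of directed
families, w.r.t. the order `LiftLE`. -/
theorem kext_dcpo_morphism {X Y : Type} (hX : IsSet X) (hY : IsSet Y)
    (f : X → Lift Y) :
    (∀ l m : Lift X, LiftLE l m → LiftLE (kext f l) (kext f m)) ∧
    (∀ {I : Type} (u : I → Lift X) (d : Lift X), LDir u → LIsLUB u d →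
      LIsLUB (fun i => kext f (u i)) (kext f d)) := by
  constructor
  · exact kext_mono f
  · intro I u d hdir hlub
    constructor
    · intro i
      exact kext_mono f _ _ (hlub.1 i)
    · intro e he hd
      obtain ⟨p, hp⟩ := hd
      obtain ⟨j, hj, hjd⟩ := lub_attained u d hdir hlub p
      rw [← hjd]
      exact he j (by show (kext f (u j)).1; rw [hjd]; exact ⟨p, hp⟩)
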